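/- Suppose the initial tuple is y_j^1 = −u_j for all j = 1,…,N+1. Then for every ℓ ≥ 1, writing ℓ = nN + s with n ≥ 0 and 1 ≤ s ≤ N, the solution of the recurrence is: y_1^ℓ = (n(N+1)+s−1)·C_N + C_s + u_{N+1}; y_j^ℓ = ν_{j+s−1} for 2 ≤ j ≤ N (the subscript of ν reduced modulo N into {1,…,N}); and y_{N+1}^ℓ = −((n(N+1)+s−1)·C_N + C_{s−1} + u_{N+1}). -/

import Mathlib

/-- The `j`-th standard basis vector `u_j` (coordinate `i : Fin (N+1)` encodes index `i+1`). -/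
def uvec (N j : ℕ) : Fin (N + 1) → ℤ := fun i => if (i : ℕ) + 1 = j then 1 else 0

/-- The fixed exponent vectors `ν_m` (`m ≥ 1`), extended `N`-periodically:
`ν_1 = -u_1 - u_{N+1}` and `ν_j = -u_j` for `2 ≤ j ≤ N`. -/
def nuvec (N m : ℕ) : Fin (N + 1) → ℤ :=
  if (m - 1) % N + 1 = 1 then -uvec N 1 - uvec N (N + 1)
  else -uvec N ((m - 1) % N + 1)

/-- `C_m := ν_1 + ν_2 + ⋯ + ν_m`, with `C_0 = 0`. -/
def Cvec (N m : ℕ) : Fin (N + 1) → ℤ := ∑ j ∈ Finset.Icc 1 m, nuvec N j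

lemma nuvec_congr (N a b : ℕ) (h : (a - 1) % N = (b - 1) % N) : nuvec N a = nuvec N b := by
  unfold nuvec; rw [h]

lemma nuvec_per (N m : ℕ) (hm : 1 ≤ m) : nuvec N (m + N) = nuvec N m := by
  apply nuvec_congr
  have : m + N - 1 = (m - 1) + N := by omega
  rw [this, Nat.add_mod_right]

lemma Cvec_Ioc (N m : ℕ) : Cvec N m = ∑ j ∈ Finset.Ioc 0 m, nuvec N j := by
  rw [Cvec, ← Finset.Icc_add_one_left_eq_Ioc, zero_add]

lemma shift_sum (N : ℕ) : ∀ a, ∑ j ∈ Finset.Ioc a (a + N), nuvec N j = Cvec N N := by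
  intro a
  induction a with
  | zero => simp [Cvec_Ioc]
  | succ a ih =>
    have h1 : ∑ j ∈ Finset.Ioc a (a + 1), nuvec N j
        + ∑ j ∈ Finset.Ioc (a + 1) (a + 1 + N), nuvec N j
        = ∑ j ∈ Finset.Ioc a (a + 1 + N), nuvec N j :=
      Finset.sum_Ioc_consecutive _ (by omega) (by omega)
    have h2 : (a : ℕ) + 1 + N = (a + N) + 1 := by omega
    have h3 : ∑ j ∈ Finset.Ioc a ((a + N) + 1), nuvec N j
        = (∑ j ∈ Finset.Ioc a (a + N), nuvec N j) + nuvec N (a + N + 1) :=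
      Finset.sum_Ioc_succ_top (by omega) _
    have h4 : nuvec N (a + N + 1) = nuvec N (a + 1) := by
      rw [show a + N + 1 = (a + 1) + N by omega]
      exact nuvec_per N (a + 1) (by omega)
    have h5 : ∑ j ∈ Finset.Ioc a (a + 1), nuvec N j = nuvec N (a + 1) := by
      rw [Nat.Ioc_succ_singleton, Finset.sum_singleton]
    rw [h2]
    rw [h2] at h1
    rw [h3, ih, h4, h5] at h1
    rw [add_comm (Cvec N N)] at h1
    exact add_left_cancel h1

lemma Cvec_period (N m : ℕ) : Cvec N (m + N) = Cvec N m + Cvec N N := by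
  rw [Cvec_Ioc, Cvec_Ioc, ← Finset.sum_Ioc_consecutive _ (Nat.zero_le m) (by omega : m ≤ m + N),
    shift_sum]

lemma Cvec_succ (N m : ℕ) : Cvec N (m + 1) = Cvec N m + nuvec N (m + 1) := by
  rw [Cvec, Cvec, Finset.sum_Icc_succ_top (by omega)]

lemma Cvec_mul (N n s : ℕ) : Cvec N (n * N + s) = n • Cvec N N + Cvec N s := by
  induction n with
  | zero => simp
  | succ n ih =>
    have : (n + 1) * N + s = (n * N + s) + N := by ring
    rw [this, Cvec_period, ih, succ_nsmul]
    abel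

theorem stmt6 (N : ℕ) (hN : 2 ≤ N) (y : ℕ → ℕ → Fin (N + 1) → ℤ)
    (hr1 : ∀ ℓ, 1 ≤ ℓ → y (ℓ + 1) 1 =
        2 • y ℓ 1 + 2 • y ℓ 2 + ∑ j ∈ Finset.Icc 3 (N + 1), y ℓ j)
    (hr2 : ∀ ℓ, 1 ≤ ℓ → ∀ j, 2 ≤ j → j ≤ N - 1 → y (ℓ + 1) j = y ℓ (j + 1))
    (hr3 : ∀ ℓ, 1 ≤ ℓ → y (ℓ + 1) N = y ℓ 1 + y ℓ (N + 1))
    (hr4 : ∀ ℓ, 1 ≤ ℓ → y (ℓ + 1) (N + 1) =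
        -(2 • y ℓ 1 + ∑ j ∈ Finset.Icc 2 (N + 1), y ℓ j))
    (hinit : ∀ j, 1 ≤ j → j ≤ N + 1 → y 1 j = -uvec N j) :
    ∀ n s : ℕ, 1 ≤ s → s ≤ N →
      y (n * N + s) 1 = (n * (N + 1) + s - 1) • Cvec N N + Cvec N s + uvec N (N + 1) ∧
      (∀ j, 2 ≤ j → j ≤ N → y (n * N + s) j = nuvec N (j + s - 1)) ∧
      y (n * N + s) (N + 1) =
        -((n * (N + 1) + s - 1) • Cvec N N + Cvec N (s - 1) + uvec N (N + 1)) := by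
  have key : ∀ k : ℕ,
      y (k + 1) 1 = k • Cvec N N + Cvec N (k + 1) + uvec N (N + 1) ∧
      (∀ j, 2 ≤ j → j ≤ N → y (k + 1) j = nuvec N (j + k)) ∧
      y (k + 1) (N + 1) = -(k • Cvec N N + Cvec N k + uvec N (N + 1)) := by
    intro k
    induction k with
    | zero =>
      refine ⟨?_, ?_, ?_⟩
      · rw [hinit 1 (by omega) (by omega)]
        have h1 : Cvec N 1 = nuvec N 1 := by
          rw [Cvec]; simp
        have h2 : nuvec N 1 = -uvec N 1 - uvec N (N + 1) := by
          rw [nuvec]; simp [Nat.mod_eq_of_lt]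
        rw [h1, h2, zero_nsmul]; abel
      · intro j h2j hjN
        rw [hinit j (by omega) (by omega)]
        have : nuvec N (j + 0) = -uvec N j := by
          rw [nuvec]
          have h1 : (j + 0 - 1) % N = j - 1 := Nat.mod_eq_of_lt (by omega)
          rw [h1]
          have : j - 1 + 1 = j := by omega
          rw [this]
          simp [show ¬ j = 1 by omega]
        rw [this]
      · rw [hinit (N + 1) (by omega) (by omega)]
        have : Cvec N 0 = 0 := by simp [Cvec]
        rw [this, zero_nsmul]; abel
    | succ k ih =>
      obtain ⟨ih1, ih2, ih3⟩ := ih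
      -- reindexed middle sum
      have hT : ∑ j ∈ Finset.Ioc 1 N, y (k + 1) j = Cvec N N - nuvec N (k + 1) := by
        have e1 : ∑ j ∈ Finset.Ioc 1 N, y (k + 1) j = ∑ j ∈ Finset.Ioc 1 N, nuvec N (j + k) :=
          Finset.sum_congr rfl (fun j hj => by
            rw [Finset.mem_Ioc] at hj
            exact ih2 j (by omega) hj.2)
        have e2 : ∑ j ∈ Finset.Ioc 1 N, nuvec N (j + k)
            = ∑ m ∈ Finset.Ioc (1 + k) (N + k), nuvec N m := by
          rw [← Finset.map_add_right_Ioc, Finset.sum_map]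
          rfl
        have e3 : ∑ j ∈ Finset.Ioc k (k + N), nuvec N j
            = nuvec N (k + 1) + ∑ m ∈ Finset.Ioc (1 + k) (N + k), nuvec N m := by
          rw [show Finset.Ioc (1 + k) (N + k) = Finset.Ioc (k + 1) (k + N) by rw [add_comm 1 k, add_comm N k],
            ← Finset.sum_Ioc_consecutive (nuvec N) (by omega : k ≤ k + 1) (by omega : k + 1 ≤ k + N),
            Nat.Ioc_succ_singleton, Finset.sum_singleton]
        have h := shift_sum N k
        rw [e3] at h
        rw [e1, e2, ← h]
        abel
      have hS2 : ∑ j ∈ Finset.Icc 2 (N + 1), y (k + 1) j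
          = Cvec N N - nuvec N (k + 1) + y (k + 1) (N + 1) := by
        have h12 : Finset.Icc 2 N = Finset.Ioc 1 N :=
          Finset.ext fun x => by simp only [Finset.mem_Icc, Finset.mem_Ioc]; omega
        rw [Finset.sum_Icc_succ_top (by omega : 2 ≤ N + 1), h12, hT]
      have hS3 : ∑ j ∈ Finset.Icc 3 (N + 1), y (k + 1) j
          = Cvec N N - nuvec N (k + 1) - y (k + 1) 2 + y (k + 1) (N + 1) := by
        have h23 : Finset.Icc 3 N = Finset.Ioc 2 N :=
          Finset.ext fun x => by simp only [Finset.mem_Icc, Finset.mem_Ioc]; omega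
        rw [Finset.sum_Icc_succ_top (by omega : 3 ≤ N + 1), h23]
        have : ∑ j ∈ Finset.Ioc 1 N, y (k + 1) j
            = y (k + 1) 2 + ∑ j ∈ Finset.Ioc 2 N, y (k + 1) j := by
          rw [← Finset.sum_Ioc_consecutive _ (by omega : 1 ≤ 2) (by omega : 2 ≤ N),
            Nat.Ioc_succ_singleton, Finset.sum_singleton]
        rw [eq_sub_iff_add_eq] at hT
        have hIoc2 : ∑ j ∈ Finset.Ioc 2 N, y (k + 1) j
            = Cvec N N - nuvec N (k + 1) - y (k + 1) 2 := by
          rw [eq_sub_iff_add_eq, eq_sub_iff_add_eq]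
          rw [← hT, this]; abel
        rw [hIoc2]
      have hy2 : y (k + 1) 2 = nuvec N (k + 2) := by
        rw [ih2 2 le_rfl hN, show 2 + k = k + 2 by omega]
      refine ⟨?_, ?_, ?_⟩
      · rw [hr1 (k + 1) (by omega), hS3, ih1, ih3, hy2,
          show k + 1 + 1 = k + 2 from rfl, Cvec_succ N (k + 1), Cvec_succ N k,
          succ_nsmul]
        module
      · intro j h2j hjN
        rcases Nat.lt_or_ge j N with hjlt | hjge
        · rw [hr2 (k + 1) (by omega) j h2j (by omega), ih2 (j + 1) (by omega) (by omega),
            show j + 1 + k = j + (k + 1) by omega]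
        · have hjN' : j = N := by omega
          rw [hjN']
          rw [hr3 (k + 1) (by omega), ih1, ih3,
            show N + (k + 1) = (k + 1) + N by omega, nuvec_per N (k + 1) (by omega),
            Cvec_succ N k]
          module
      · rw [hr4 (k + 1) (by omega), hS2, ih1, ih3, Cvec_succ N k, succ_nsmul]
        module
  intro n s hs1 hsN
  have hk : n * N + s = (n * N + s - 1) + 1 := by omega
  obtain ⟨k1, k2, k3⟩ := key (n * N + s - 1)
  rw [← hk] at k1 k2 k3
  have hA : n * N + s - 1 + n = n * (N + 1) + s - 1 := by
    have : n * (N + 1) = n * N + n := by ring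
    omega
  refine ⟨?_, ?_, ?_⟩
  · rw [k1, Cvec_mul, ← hA, add_nsmul]
    abel
  · intro j h2j hjN
    rw [k2 j h2j hjN]
    apply nuvec_congr
    have h1 : j + (n * N + s - 1) - 1 = (j + s - 2) + n * N := by omega
    have h2 : j + s - 1 - 1 = j + s - 2 := by omega
    rw [h1, h2, Nat.add_mul_mod_self_right]
  · rw [k3, show Cvec N (n * N + s - 1) = n • Cvec N N + Cvec N (s - 1) from by
      rw [show n * N + s - 1 = n * N + (s - 1) by omega, Cvec_mul], ← hA, add_nsmul]
    abel
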